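/- Let {φ₀, …, φ_{n−1}} be an orthonormal basis of ℝⁿ, f ∈ ℝⁿ, and 0 < ρ < 2. Let P_m f be a best m-term approximation of f, i.e., the sum of the m terms ⟨f, φ_l⟩ φ_l with the m largest values of |⟨f, φ_l⟩| (for 1 ≤ m ≤ n). Then ‖f − P_m f‖₂ ≤ |f|_ρ / m^β, where β = 1/ρ − 1/2 and |f|_ρ = (Σ_{l=0}^{n−1} |⟨f, φ_l⟩|^ρ)^{1/ρ}. -/

import Mathlib

open Finset

/-- Approximation power of an orthonormal basis: the best nonlinear m-term approximation
error is bounded by |f|_ρ / m^(1/ρ - 1/2). -/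
theorem stmt_10 (n : ℕ) (φ : Fin n → (Fin n → ℝ))
    (hortho : ∀ l l', (∑ i, φ l i * φ l' i) = if l = l' then (1 : ℝ) else 0)
    (f : Fin n → ℝ) (ρ : ℝ) (hρ : 0 < ρ ∧ ρ < 2)
    (m : ℕ) (hm : 1 ≤ m ∧ m ≤ n)
    (T : Finset (Fin n)) (hT : T.card = m)
    (hTbig : ∀ l ∈ T, ∀ l' ∉ T, |∑ i, f i * φ l' i| ≤ |∑ i, f i * φ l i|)
    (Pmf : Fin n → ℝ) (hP : Pmf = ∑ l ∈ T, (∑ i, f i * φ l i) • φ l) :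
    Real.sqrt (∑ i, (f i - Pmf i) ^ 2) ≤
      (∑ l, |∑ i, f i * φ l i| ^ ρ) ^ (1 / ρ) / (m : ℝ) ^ (1 / ρ - 1 / 2) := by
  obtain ⟨hρ0, hρ2⟩ := hρ
  obtain ⟨hm1, hmn⟩ := hm
  have hmpos : (0:ℝ) < m := by exact_mod_cast hm1
  set c : Fin n → ℝ := fun l => ∑ i, f i * φ l i with hc
  set S : ℝ := ∑ l, |c l| ^ ρ with hS
  have hS0 : 0 ≤ S := Finset.sum_nonneg fun l _ =>
    Real.rpow_nonneg (abs_nonneg _) _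
  -- completeness of the orthonormal system
  have hcomp : ∀ i j, (∑ l, φ l i * φ l j) = if i = j then (1:ℝ) else 0 := by
    have hAAT : (Matrix.of φ) * (Matrix.of φ).transpose = 1 := by
      ext l l'
      simpa [Matrix.mul_apply, Matrix.one_apply] using hortho l l'
    have hATA := mul_eq_one_comm.mp hAAT
    intro i j
    have := congrFun (congrFun hATA i) j
    simpa [Matrix.mul_apply, Matrix.one_apply] using this
  have hf : ∀ j, f j = ∑ l, c l * φ l j := by
    intro j
    calc f j = ∑ i, f i * ∑ l, φ l i * φ l j := by
          simp [hcomp, mul_ite, Finset.sum_ite_eq']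
      _ = ∑ l, c l * φ l j := by
          simp_rw [Finset.mul_sum]
          rw [Finset.sum_comm]
          refine Finset.sum_congr rfl fun l _ => ?_
          rw [hc]
          simp_rw [Finset.sum_mul]
          exact Finset.sum_congr rfl fun i _ => by ring
  have hdiff : ∀ j, f j - Pmf j = ∑ l ∈ Tᶜ, c l * φ l j := by
    intro j
    rw [hP]
    simp only [Finset.sum_apply, Pi.smul_apply, smul_eq_mul]
    rw [hf j, ← Finset.sum_compl_add_sum T (fun l => c l * φ l j)]
    ring
  have hnorm : ∑ i, (f i - Pmf i) ^ 2 = ∑ l ∈ Tᶜ, (c l) ^ 2 := by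
    calc ∑ i, (f i - Pmf i) ^ 2
        = ∑ i, (∑ l ∈ Tᶜ, c l * φ l i) * (∑ l' ∈ Tᶜ, c l' * φ l' i) := by
          simp [hdiff, sq]
      _ = ∑ l ∈ Tᶜ, ∑ l' ∈ Tᶜ, (c l * c l') * ∑ i, φ l i * φ l' i := by
          simp_rw [Finset.sum_mul_sum, Finset.mul_sum]
          rw [Finset.sum_comm]
          refine Finset.sum_congr rfl fun l _ => ?_
          rw [Finset.sum_comm]
          refine Finset.sum_congr rfl fun l' _ => ?_
          exact Finset.sum_congr rfl fun i _ => by ring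
      _ = ∑ l ∈ Tᶜ, (c l) ^ 2 := by
          refine Finset.sum_congr rfl fun l hl => ?_
          simp [hortho, mul_ite, Finset.sum_ite_eq', hl, sq]
  have hkey : ∀ l ∈ Tᶜ, (m:ℝ) * |c l| ^ ρ ≤ S := by
    intro l hl
    rw [Finset.mem_compl] at hl
    have h1 : ∀ l' ∈ T, |c l| ^ ρ ≤ |c l'| ^ ρ := fun l' hl' =>
      Real.rpow_le_rpow (abs_nonneg _) (hTbig l' hl' l hl) hρ0.le
    calc (m:ℝ) * |c l| ^ ρ = ∑ _l' ∈ T, |c l| ^ ρ := by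
          rw [Finset.sum_const, hT, nsmul_eq_mul]
      _ ≤ ∑ l' ∈ T, |c l'| ^ ρ := Finset.sum_le_sum h1
      _ ≤ S := Finset.sum_le_sum_of_subset_of_nonneg (Finset.subset_univ T)
          fun _ _ _ => Real.rpow_nonneg (abs_nonneg _) _
  rcases eq_or_lt_of_le hS0 with hS0' | hSpos
  · -- S = 0, everything vanishes
    have hzero : ∀ l, c l = 0 := by
      intro l
      have := (Finset.sum_eq_zero_iff_of_nonneg
        (fun l _ => Real.rpow_nonneg (abs_nonneg (c l)) ρ)).mp hS0'.symm l (Finset.mem_univ l)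
      have := (Real.rpow_eq_zero (abs_nonneg _) hρ0.ne').mp this
      exact abs_eq_zero.mp this
    have : ∑ i, (f i - Pmf i) ^ 2 = 0 := by
      rw [hnorm]; exact Finset.sum_eq_zero fun l _ => by rw [hzero l]; ring
    rw [this, Real.sqrt_zero]
    positivity
  · -- S > 0
    have hSm : 0 < S / m := div_pos hSpos hmpos
    have hbound : ∀ l ∈ Tᶜ, (c l) ^ 2 ≤ (S / m) ^ ((2 - ρ)/ρ) * |c l| ^ ρ := by
      intro l hl
      have h1 : |c l| ^ ρ ≤ S / m := by
        rw [le_div_iff₀ hmpos, mul_comm]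
        exact hkey l hl
      have h2 : |c l| ≤ (S / m) ^ (1/ρ) := by
        have := Real.rpow_le_rpow (Real.rpow_nonneg (abs_nonneg _) _) h1
          (by positivity : (0:ℝ) ≤ 1/ρ)
        rwa [← Real.rpow_mul (abs_nonneg _), mul_one_div_cancel hρ0.ne',
          Real.rpow_one] at this
      have h3 : |c l| ^ (2 - ρ) ≤ ((S / m) ^ (1/ρ)) ^ (2 - ρ) :=
        Real.rpow_le_rpow (abs_nonneg _) h2 (by linarith)
      have h4 : ((S / m) ^ (1/ρ)) ^ (2 - ρ) = (S / m) ^ ((2 - ρ)/ρ) := by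
        rw [← Real.rpow_mul hSm.le]
        ring_nf
      calc (c l) ^ 2 = |c l| ^ ((2 - ρ) + ρ) := by
            rw [show (2 - ρ) + ρ = 2 by ring, show (2:ℝ) = ((2:ℕ):ℝ) by norm_num,
              Real.rpow_natCast, sq_abs]
        _ = |c l| ^ (2 - ρ) * |c l| ^ ρ := by
            rw [Real.rpow_add_of_nonneg (abs_nonneg _) (by linarith) hρ0.le]
        _ ≤ (S / m) ^ ((2 - ρ)/ρ) * |c l| ^ ρ := by
            apply mul_le_mul_of_nonneg_right _ (Real.rpow_nonneg (abs_nonneg _) _)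
            rw [← h4]; exact h3
    have hsum : ∑ l ∈ Tᶜ, (c l) ^ 2 ≤ (S / m) ^ ((2 - ρ)/ρ) * S := by
      calc ∑ l ∈ Tᶜ, (c l) ^ 2 ≤ ∑ l ∈ Tᶜ, (S / m) ^ ((2 - ρ)/ρ) * |c l| ^ ρ :=
            Finset.sum_le_sum hbound
        _ = (S / m) ^ ((2 - ρ)/ρ) * ∑ l ∈ Tᶜ, |c l| ^ ρ := by rw [Finset.mul_sum]
        _ ≤ (S / m) ^ ((2 - ρ)/ρ) * S := by
            apply mul_le_mul_of_nonneg_left _ (Real.rpow_nonneg hSm.le _)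
            exact Finset.sum_le_sum_of_subset_of_nonneg (Finset.subset_univ _)
              fun _ _ _ => Real.rpow_nonneg (abs_nonneg _) _
    have hrhs : (S / m) ^ ((2 - ρ)/ρ) * S = (S ^ (1/ρ) / (m:ℝ) ^ (1/ρ - 1/2)) ^ 2 := by
      rw [Real.div_rpow hS0 hmpos.le, div_pow, ← Real.rpow_natCast (S ^ (1/ρ)),
        ← Real.rpow_natCast ((m:ℝ) ^ (1/ρ - 1/2)), ← Real.rpow_mul hS0,
        ← Real.rpow_mul hmpos.le, Nat.cast_ofNat]
      rw [div_mul_eq_mul_div, div_eq_div_iff (by positivity) (by positivity)]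
      rw [show ((1:ℝ)/ρ - 1/2)*2 = (2-ρ)/ρ by field_simp]
      congr 1
      nth_rewrite 2 [← Real.rpow_one S]
      rw [← Real.rpow_add hSpos]
      congr 1
      field_simp
      ring
    calc Real.sqrt (∑ i, (f i - Pmf i) ^ 2)
        ≤ Real.sqrt ((S / m) ^ ((2 - ρ)/ρ) * S) := by
          apply Real.sqrt_le_sqrt
          rw [hnorm]; exact hsum
      _ = S ^ (1/ρ) / (m:ℝ) ^ (1/ρ - 1/2) := by
          rw [hrhs, Real.sqrt_sq (by positivity)]
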